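/- Let M be the 2x2 real diagonal matrix with distinct positive diagonal entries \rho_1 > \rho_2 > 0, let H be a halfplane {(x,y) : c1*x + c2*y + c3 > 0}, and let p \in \mathbb{R}^2. Then the set of n \in \mathbb{N} at which the orbit point p M^n lies in H changes membership status (switches from inside H to outside, or conversely) at most twice. -/
import Mathlib

/-- If `P m` holds and `P n` fails with `m ≤ n`, there is a "down switch" in between. -/
private lemma find_switch (P : ℕ → Prop) : ∀ n m, m ≤ n → P m → ¬ P n →
    ∃ k, m ≤ k ∧ k < n ∧ P k ∧ ¬ P (k + 1) := by
  intro n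
  induction n with
  | zero =>
    intro m hm hPm hPn
    interval_cases m
    exact absurd hPm hPn
  | succ n ih =>
    intro m hm hPm hPn
    rcases Nat.eq_or_lt_of_le hm with rfl | hlt
    · exact absurd hPm hPn
    · have hm' : m ≤ n := Nat.lt_succ_iff.mp hlt
      by_cases h : P n
      · exact ⟨n, hm', Nat.lt_succ_self n, h, hPn⟩
      · obtain ⟨k, hk1, hk2, hk3, hk4⟩ := ih m hm' hPm h
        exact ⟨k, hk1, Nat.lt_succ_of_lt hk2, hk3, hk4⟩

/-- A sequence `n ↦ A * r ^ n + C` with `r > 0` is monotone or antitone. -/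
private lemma mono_or_anti (A C r : ℝ) (hr : 0 < r) :
    Monotone (fun n : ℕ => A * r ^ n + C) ∨ Antitone (fun n : ℕ => A * r ^ n + C) := by
  rcases le_or_gt 0 A with hA | hA <;> rcases le_or_gt 1 r with h1 | h1
  · left
    intro m n hmn
    have := pow_le_pow_right₀ h1 hmn
    simp only
    nlinarith
  · right
    intro m n hmn
    have := pow_le_pow_of_le_one hr.le h1.le hmn
    simp only
    nlinarith
  · right
    intro m n hmn
    have := pow_le_pow_right₀ h1 hmn
    simp only
    nlinarith
  · left
    intro m n hmn
    have := pow_le_pow_of_le_one hr.le h1.le hmn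
    simp only
    nlinarith

/-- Two switches of the same type lead to a contradiction, given the sign bridge `v`. -/
private lemma two_same_switches (f v : ℕ → ℝ)
    (hv : Monotone v ∨ Antitone v)
    (hup : ∀ n, ¬ 0 < f n → 0 < f (n + 1) → 0 < v n)
    (hdn : ∀ n, 0 < f n → ¬ 0 < f (n + 1) → v n < 0)
    (i j : ℕ) (hij : i < j)
    (hsame : (0 < f i ↔ 0 < f j))
    (hsi : ¬(0 < f i ↔ 0 < f (i + 1))) (hsj : ¬(0 < f j ↔ 0 < f (j + 1))) :
    False := by
  by_cases hDi : 0 < f i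
  · -- both are down switches
    have hDj : 0 < f j := hsame.mp hDi
    have hDi1 : ¬ 0 < f (i + 1) := fun h => hsi ⟨fun _ => h, fun _ => hDi⟩
    have hDj1 : ¬ 0 < f (j + 1) := fun h => hsj ⟨fun _ => h, fun _ => hDj⟩
    -- find an up switch k with i < k < j
    obtain ⟨k, hk1, hk2, hk3, hk4⟩ :=
      find_switch (fun n => ¬ 0 < f n) j (i + 1) hij hDi1 (not_not_intro hDj)
    have hvk : 0 < v k := hup k hk3 (not_not.mp hk4)
    have hvi : v i < 0 := hdn i hDi hDi1
    have hvj : v j < 0 := hdn j hDj hDj1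
    rcases hv with hmono | hanti
    · have := hmono (le_of_lt hk2) -- v k ≤ v j
      linarith
    · have := hanti (Nat.le_of_succ_le hk1) -- v k ≤ v i
      linarith
  · -- both are up switches
    have hDj : ¬ 0 < f j := fun h => hDi (hsame.mpr h)
    have hDi1 : 0 < f (i + 1) := by
      by_contra h
      exact hsi ⟨fun h' => absurd h' hDi, fun h' => absurd h' h⟩
    have hDj1 : 0 < f (j + 1) := by
      by_contra h
      exact hsj ⟨fun h' => absurd h' hDj, fun h' => absurd h' h⟩
    obtain ⟨k, hk1, hk2, hk3, hk4⟩ :=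
      find_switch (fun n => 0 < f n) j (i + 1) hij hDi1 hDj
    have hvk : v k < 0 := hdn k hk3 hk4
    have hvi : 0 < v i := hup i hDi hDi1
    have hvj : 0 < v j := hup j hDj hDj1
    rcases hv with hmono | hanti
    · have := hmono (Nat.le_of_succ_le hk1) -- v i ≤ v k
      linarith
    · have := hanti (le_of_lt hk2) -- v j ≤ v k
      linarith

/-- For the diagonal matrix `M = diag(ρ1, ρ2)` with `ρ1 > ρ2 > 0`, a point `p = (x,y)`,
and the halfplane `H = {(u,w) : c1*u + c2*w + c3 > 0}`, the membership of the orbit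
point `p Mⁿ` in `H` changes at most twice as `n` ranges over `ℕ`. -/
theorem diagonal_orbit_halfplane_at_most_two_switches
    (ρ1 ρ2 c1 c2 c3 x y : ℝ) (h21 : ρ2 < ρ1) (h2 : 0 < ρ2) :
    let M : Matrix (Fin 2) (Fin 2) ℝ := Matrix.diagonal ![ρ1, ρ2]
    let inH : ℕ → Prop := fun n =>
      0 < c1 * (Matrix.vecMul ![x, y] (M ^ n)) 0
          + c2 * (Matrix.vecMul ![x, y] (M ^ n)) 1 + c3
    ∀ n1 n2 n3 : ℕ, n1 < n2 → n2 < n3 →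
      ¬(¬(inH n1 ↔ inH (n1 + 1)) ∧ ¬(inH n2 ↔ inH (n2 + 1)) ∧
        ¬(inH n3 ↔ inH (n3 + 1))) := by
  intro M inH n1 n2 n3 h12 h23 ⟨hs1, hs2, hs3⟩
  set f : ℕ → ℝ := fun n => c1 * x * ρ1 ^ n + c2 * y * ρ2 ^ n + c3 with hf
  have hinH : ∀ n, inH n ↔ 0 < f n := by
    intro n
    simp only [inH, M, Matrix.diagonal_pow, Matrix.vecMul_diagonal, hf]
    simp [Pi.pow_apply]
    ring_nf
  set v : ℕ → ℝ := fun n => c1 * x * (ρ1 - ρ2) * ρ1 ^ n + c3 * (1 - ρ2) with hvdef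
  have hv : ∀ n, v n = f (n + 1) - ρ2 * f n := by
    intro n
    simp only [hvdef, hf, pow_succ]
    ring
  have hmono : Monotone v ∨ Antitone v :=
    mono_or_anti (c1 * x * (ρ1 - ρ2)) (c3 * (1 - ρ2)) ρ1 (h2.trans h21)
  have hup : ∀ n, ¬ 0 < f n → 0 < f (n + 1) → 0 < v n := by
    intro n h1 h2'
    rw [hv]
    push_neg at h1
    nlinarith
  have hdn : ∀ n, 0 < f n → ¬ 0 < f (n + 1) → v n < 0 := by
    intro n h1 h2'
    rw [hv]
    push_neg at h2'
    nlinarith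
  rw [hinH n1, hinH (n1 + 1)] at hs1
  rw [hinH n2, hinH (n2 + 1)] at hs2
  rw [hinH n3, hinH (n3 + 1)] at hs3
  -- among three switches, two have the same type
  by_cases h12' : (0 < f n1 ↔ 0 < f n2)
  · exact two_same_switches f v hmono hup hdn n1 n2 h12 h12' hs1 hs2
  · by_cases h13' : (0 < f n1 ↔ 0 < f n3)
    · exact two_same_switches f v hmono hup hdn n1 n3 (h12.trans h23) h13' hs1 hs3
    · have h23' : (0 < f n2 ↔ 0 < f n3) := by tauto
      exact two_same_switches f v hmono hup hdn n2 n3 h23 h23' hs2 hs3
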